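/- arXiv:1704.00035 — 2 statements merged into one kernel-verified Lean document; each statement's English description precedes it below -/
import Mathlib

section
/- For n×n real matrices A and B and d = k + s with k ∈ {0,…,n−1} and s ∈ [0,1], the singular value function ω_d is submultiplicative: ω_d(AB) ≤ ω_d(A)·ω_d(B), where ω_d(A) = α₁(A)⋯α_k(A)·α_{k+1}(A)^s and α₁ ≥ ⋯ ≥ αₙ are the singular values. -/
open scoped ENNReal
open Filter Set

/-- `α` (ℕ-indexed, nonincreasing, vanishing from index n on) lists the singular values
of the n×n real matrix A, i.e. A = U · diag(α) · V with U, V orthogonal. -/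
def IsSVals (n : ℕ) (A : Matrix (Fin n) (Fin n) ℝ) (α : ℕ → ℝ) : Prop :=
  (∀ i j, i ≤ j → α j ≤ α i) ∧ (∀ i, 0 ≤ α i) ∧ (∀ i, n ≤ i → α i = 0) ∧
  ∃ U V : Matrix (Fin n) (Fin n) ℝ,
    U ∈ Matrix.orthogonalGroup (Fin n) ℝ ∧ V ∈ Matrix.orthogonalGroup (Fin n) ℝ ∧
    A = U * Matrix.diagonal (fun i : Fin n => α i) * V

/-- The singular value function ω_d(A) = α₁⋯α_k·α_{k+1}^s for d = k + s
(here α is 0-indexed: α (i-1) is the i-th singular value α_i). -/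
noncomputable def omegaD (α : ℕ → ℝ) (k : ℕ) (s : ℝ) : ℝ :=
  (∏ i ∈ Finset.range k, α i) * α k ^ s

namespace Stmt10Aux

open Matrix Finset

lemma le_of_strictMono_fin {k n : ℕ} (f : Fin k → Fin n) (hf : StrictMono f) :
    ∀ m (hm : m < k), m ≤ (f ⟨m, hm⟩ : ℕ) := by
  intro m
  induction m with
  | zero => intro _; exact Nat.zero_le _
  | succ j ih =>
    intro hm
    have hj : j < k := Nat.lt_of_succ_lt hm
    have h1 : f ⟨j, hj⟩ < f ⟨j + 1, hm⟩ := hf (by simp [Fin.lt_def])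
    have h2 := ih hj
    have h3 : (f ⟨j, hj⟩ : ℕ) < (f ⟨j + 1, hm⟩ : ℕ) := h1
    omega

lemma cauchyBinet {k n : ℕ} (P : Matrix (Fin k) (Fin n) ℝ) (Q : Matrix (Fin n) (Fin k) ℝ) :
    (P * Q).det = ∑ S : {S : Finset (Fin n) // S.card = k},
      (P.submatrix id (S.1.orderEmbOfFin S.2)).det *
      (Q.submatrix (S.1.orderEmbOfFin S.2) id).det := by
  classical
  have h1 : (P * Q).det
      = ∑ φ : Fin k → Fin n, (∏ i, P i (φ i)) * (Q.submatrix φ id).det := by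
    have h0 : (P * Q).det = detRowAlternating (fun i => ∑ l : Fin n, P i l • Q l) := by
      unfold Matrix.det
      congr 1
      ext i j
      simp [Matrix.mul_apply]
    rw [h0]
    have h2 := (detRowAlternating (R := ℝ) (n := Fin k)).toMultilinearMap.map_sum
      (g := fun i (l : Fin n) => P i l • Q l)
    rw [show (detRowAlternating (R := ℝ) (n := Fin k)) (fun i => ∑ l : Fin n, P i l • Q l)
        = (detRowAlternating (R := ℝ) (n := Fin k)).toMultilinearMap
          (fun i => ∑ l : Fin n, P i l • Q l) from rfl, h2]
    refine Finset.sum_congr rfl fun φ _ => ?_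
    have h3 := MultilinearMap.map_smul_univ
      (detRowAlternating (R := ℝ) (n := Fin k)).toMultilinearMap
      (fun i => P i (φ i)) (fun i => Q (φ i))
    rw [show ((detRowAlternating (R := ℝ) (n := Fin k)).toMultilinearMap
        (fun i => P i (φ i) • Q (φ i))) = (detRowAlternating (R := ℝ) (n := Fin k)).toMultilinearMap
        (fun i => (fun i => P i (φ i)) i • (fun i => Q (φ i)) i) from rfl, h3]
    rfl
  rw [h1]
  rw [← Finset.sum_filter_of_ne (p := fun φ : Fin k → Fin n => Function.Injective φ)
    (f := fun φ => (∏ i, P i (φ i)) * (Q.submatrix φ id).det) (by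
      intro φ _ hne
      by_contra hni
      apply hne
      simp only [Function.Injective, not_forall] at hni
      obtain ⟨i, j, hij, hne'⟩ := hni
      show (∏ i, P i (φ i)) * (Q.submatrix φ id).det = 0
      rw [Matrix.det_zero_of_row_eq hne' (by ext c; simp [hij]), mul_zero])]
  have h2 := Finset.sum_nbij
    (s := (univ : Finset ({S : Finset (Fin n) // S.card = k} × Equiv.Perm (Fin k))))
    (t := univ.filter fun φ : Fin k → Fin n => Function.Injective φ)
    (f := fun p => (∏ i, P i ((p.1.1.orderEmbOfFin p.1.2) (p.2 i))) *
      (Q.submatrix ((p.1.1.orderEmbOfFin p.1.2) ∘ p.2) id).det)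
    (g := fun φ => (∏ i, P i (φ i)) * (Q.submatrix φ id).det)
    (i := fun p => (p.1.1.orderEmbOfFin p.1.2) ∘ p.2)
    (fun p _ => by
      refine Finset.mem_filter.mpr ⟨Finset.mem_univ _, ?_⟩
      exact ((p.1.1.orderEmbOfFin p.1.2).injective).comp p.2.injective)
    (by
      rintro ⟨⟨S, hS⟩, σ⟩ - ⟨⟨T, hT⟩, τ⟩ - hpq
      simp only [Prod.mk.injEq] at hpq ⊢
      have hrange : ∀ (U : Finset (Fin n)) (hU : U.card = k) (ρ : Equiv.Perm (Fin k)),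
          Set.range ((U.orderEmbOfFin hU) ∘ ρ) = (U : Set (Fin n))  := by
        intro U hU ρ
        rw [Set.range_comp, Equiv.range_eq_univ, Set.image_univ, Finset.range_orderEmbOfFin]
      have hST : S = T := by
        have := hrange S hS σ
        rw [hpq, hrange T hT τ] at this
        exact_mod_cast Finset.coe_injective this.symm
      subst hST
      refine ⟨Subtype.ext rfl, ?_⟩
      refine Equiv.ext fun i => ?_
      have := congrFun hpq i
      simp only [Function.comp_apply] at this
      exact (S.orderEmbOfFin hS).injective this)
    (by
      intro φ hφ
      have hinj : Function.Injective φ := by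
        simp only [Finset.coe_filter, Set.mem_setOf_eq] at hφ
        exact hφ.2
      set S : Finset (Fin n) := univ.image φ with hSdef
      have hcard : S.card = k := by
        rw [hSdef, Finset.card_image_of_injective _ hinj, card_univ, Fintype.card_fin]
      have hmem : ∀ i, φ i ∈ S := fun i => Finset.mem_image_of_mem φ (mem_univ i)
      set ψ : Fin k → Fin k := fun i => (S.orderIsoOfFin hcard).symm ⟨φ i, hmem i⟩ with hψdef
      have hψinj : Function.Injective ψ := by
        intro a b hab
        have h5 : (⟨φ a, hmem a⟩ : {x // x ∈ S}) = ⟨φ b, hmem b⟩ := by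
          have := congrArg (S.orderIsoOfFin hcard) hab
          simpa [hψdef] using this
        exact hinj (congrArg Subtype.val h5)
      let τ : Equiv.Perm (Fin k) := Equiv.ofBijective ψ (Finite.injective_iff_bijective.mp hψinj)
      refine ⟨(⟨S, hcard⟩, τ), by simp, ?_⟩
      funext i
      show (S.orderEmbOfFin hcard) (ψ i) = φ i
      rw [← Finset.coe_orderIsoOfFin_apply]
      simp [hψdef]
    )
    (fun p _ => rfl)
  rw [← h2]
  rw [Fintype.sum_prod_type]
  refine Finset.sum_congr rfl fun S _ => ?_
  have key : ∀ σ : Equiv.Perm (Fin k),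
      (∏ i, P i ((S.1.orderEmbOfFin S.2) (σ i))) *
        (Q.submatrix ((S.1.orderEmbOfFin S.2) ∘ σ) id).det
      = ((Equiv.Perm.sign σ : ℤ) : ℝ) * (∏ i, P i ((S.1.orderEmbOfFin S.2) (σ i))) *
        (Q.submatrix (S.1.orderEmbOfFin S.2) id).det := by
    intro σ
    have hsub : (Q.submatrix ((S.1.orderEmbOfFin S.2) ∘ σ) id)
        = (Q.submatrix (S.1.orderEmbOfFin S.2) id).submatrix σ id := by
      ext i j; simp
    rw [hsub, Matrix.det_permute]
    push_cast
    ring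
  simp_rw [key]
  rw [← Finset.sum_mul]
  congr 1
  rw [← Matrix.det_transpose, Matrix.det_apply']
  refine Finset.sum_congr rfl fun σ _ => ?_
  congr 1

noncomputable def cmpd (n k : ℕ) (M : Matrix (Fin n) (Fin n) ℝ) :
    Matrix {S : Finset (Fin n) // S.card = k} {S : Finset (Fin n) // S.card = k} ℝ :=
  fun S T => (M.submatrix (S.1.orderEmbOfFin S.2) (T.1.orderEmbOfFin T.2)).det

variable {n k : ℕ}

lemma cmpd_mul (M N : Matrix (Fin n) (Fin n) ℝ) :
    cmpd n k (M * N) = cmpd n k M * cmpd n k N := by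
  ext S T
  have h1 : (M * N).submatrix (S.1.orderEmbOfFin S.2) (T.1.orderEmbOfFin T.2)
      = (M.submatrix (S.1.orderEmbOfFin S.2) id) * (N.submatrix id (T.1.orderEmbOfFin T.2)) := by
    ext i j; simp [Matrix.mul_apply]
  rw [cmpd, h1, cauchyBinet]
  simp only [Matrix.mul_apply, cmpd, Matrix.submatrix_submatrix]
  refine Finset.sum_congr rfl fun U _ => ?_
  simp [Function.comp_def]

lemma cmpd_transpose (M : Matrix (Fin n) (Fin n) ℝ) :
    cmpd n k Mᵀ = (cmpd n k M)ᵀ := by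
  ext S T
  rw [cmpd, Matrix.transpose_apply, cmpd, ← Matrix.det_transpose]
  congr 1

lemma cmpd_diagonal (d : Fin n → ℝ) :
    cmpd n k (Matrix.diagonal d) = Matrix.diagonal (fun S => ∏ i ∈ S.1, d i) := by
  ext S T
  by_cases hST : S = T
  · subst hST
    rw [Matrix.diagonal_apply_eq]
    have h1 : (Matrix.diagonal d).submatrix (S.1.orderEmbOfFin S.2) (S.1.orderEmbOfFin S.2)
        = Matrix.diagonal (fun i => d (S.1.orderEmbOfFin S.2 i)) := by
      ext i j
      rcases eq_or_ne i j with h | h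
      · subst h; simp
      · rw [Matrix.diagonal_apply_ne _ h, Matrix.submatrix_apply,
          Matrix.diagonal_apply_ne _ (fun hc => h ((S.1.orderEmbOfFin S.2).injective hc))]
    rw [cmpd, h1, Matrix.det_diagonal]
    have h2 : S.1 = Finset.univ.map ⟨S.1.orderEmbOfFin S.2, (S.1.orderEmbOfFin S.2).injective⟩ := by
      apply Finset.coe_injective
      simp [Finset.range_orderEmbOfFin]
    conv_rhs => rw [h2]
    rw [Finset.prod_map]
    rfl
  · rw [Matrix.diagonal_apply_ne _ hST]
    have hcard : (T.1 \ S.1).Nonempty := by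
      rw [Finset.sdiff_nonempty]
      intro hsub
      exact hST (Subtype.ext (Finset.eq_of_subset_of_card_le hsub (by rw [S.2, T.2])).symm)
    obtain ⟨x, hx⟩ := hcard
    have hxT : x ∈ T.1 := (Finset.mem_sdiff.mp hx).1
    have hxS : x ∉ S.1 := (Finset.mem_sdiff.mp hx).2
    obtain ⟨j, hj⟩ : ∃ j, T.1.orderEmbOfFin T.2 j = x := by
      have : x ∈ Set.range (T.1.orderEmbOfFin T.2) := by
        rw [Finset.range_orderEmbOfFin]; exact_mod_cast hxT
      exact this
    apply Matrix.det_eq_zero_of_column_eq_zero j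
    intro i
    rw [Matrix.submatrix_apply, Matrix.diagonal_apply_ne]
    intro hc
    exact hxS ((hc.trans hj) ▸ Finset.orderEmbOfFin_mem S.1 S.2 i)

lemma cmpd_one : cmpd n k (1 : Matrix (Fin n) (Fin n) ℝ) = 1 := by
  rw [show (1 : Matrix (Fin n) (Fin n) ℝ) = Matrix.diagonal (fun _ => 1) from
    (Matrix.diagonal_one).symm, cmpd_diagonal]
  simp

section PSD

variable {ι : Type*} [Fintype ι] [DecidableEq ι]

/-- `MᵀM ≤ c • 1` in the PSD order. -/
def SBnd (M : Matrix ι ι ℝ) (c : ℝ) : Prop :=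
  (c • (1 : Matrix ι ι ℝ) - Mᵀ * M).PosSemidef

lemma psd_smul {Y : Matrix ι ι ℝ} (hY : Y.PosSemidef) {a : ℝ} (ha : 0 ≤ a) :
    (a • Y).PosSemidef := by
  constructor
  · unfold Matrix.IsHermitian
    rw [Matrix.conjTranspose_smul]
    rw [hY.1]
    congr 1
  · intro x
    convert mul_nonneg ha (hY.2 x) using 1
    simp only [Finsupp.mul_sum, Matrix.smul_apply, smul_eq_mul]
    exact Finsupp.sum_congr fun i _ => Finsupp.sum_congr fun j _ => by ring

lemma psd_conj {P : Matrix ι ι ℝ} (hP : P.PosSemidef) (N : Matrix ι ι ℝ) :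
    (Nᵀ * P * N).PosSemidef := by
  have := hP.conjTranspose_mul_mul_same N
  rwa [Matrix.conjTranspose_eq_transpose_of_trivial] at this

lemma sbnd_mul {M N : Matrix ι ι ℝ} {a b : ℝ} (hM : SBnd M a) (hN : SBnd N b) (ha : 0 ≤ a) :
    SBnd (M * N) (a * b) := by
  unfold SBnd at *
  have key : (a * b) • (1 : Matrix ι ι ℝ) - (M * N)ᵀ * (M * N)
      = Nᵀ * (a • (1 : Matrix ι ι ℝ) - Mᵀ * M) * N + a • (b • (1 : Matrix ι ι ℝ) - Nᵀ * N) := by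
    simp only [Matrix.transpose_mul, Matrix.mul_sub, Matrix.sub_mul, smul_sub,
      mul_smul_comm, smul_mul_assoc, Matrix.mul_one, smul_smul, Matrix.mul_assoc]
    abel
  rw [key]
  exact (psd_conj hM N).add (psd_smul hN ha)

lemma psd_diag_nonneg {P : Matrix ι ι ℝ} (hP : P.PosSemidef) (i : ι) : 0 ≤ P i i := by
  exact hP.diag_nonneg

lemma cancel_left {P : Matrix ι ι ℝ} (h : Pᵀ * P = 1) (Z : Matrix ι ι ℝ) :
    Pᵀ * (P * Z) = Z := by
  rw [← Matrix.mul_assoc, h, Matrix.one_mul]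

end PSD

lemma orth_tr_mul {U : Matrix (Fin n) (Fin n) ℝ} (hU : U ∈ Matrix.orthogonalGroup (Fin n) ℝ) :
    Uᵀ * U = 1 := by
  have := (Matrix.mem_orthogonalGroup_iff' (Fin n) ℝ).mp hU
  exact this

lemma orth_mul_tr {U : Matrix (Fin n) (Fin n) ℝ} (hU : U ∈ Matrix.orthogonalGroup (Fin n) ℝ) :
    U * Uᵀ = 1 := by
  have := (Matrix.mem_orthogonalGroup_iff (Fin n) ℝ).mp hU
  exact this

lemma sbnd_svd_iff (U V A : Matrix (Fin n) (Fin n) ℝ)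
    (hU : U ∈ Matrix.orthogonalGroup (Fin n) ℝ) (hV : V ∈ Matrix.orthogonalGroup (Fin n) ℝ)
    (d : Fin n → ℝ) (hA : A = U * Matrix.diagonal d * V) (c : ℝ) :
    SBnd (cmpd n k A) c ↔
      (c • (1 : Matrix {S : Finset (Fin n) // S.card = k} {S : Finset (Fin n) // S.card = k} ℝ)
        - Matrix.diagonal (fun S : {S : Finset (Fin n) // S.card = k} =>
            (∏ i ∈ S.1, d i) ^ 2)).PosSemidef := by
  set D2 := Matrix.diagonal (fun S : {S : Finset (Fin n) // S.card = k} =>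
    (∏ i ∈ S.1, d i) ^ 2) with hD2def
  set CU := cmpd n k U
  set CV := cmpd n k V
  set CD := Matrix.diagonal
    (fun S : {S : Finset (Fin n) // S.card = k} => ∏ i ∈ S.1, d i) with hCDdef
  have hCUtCU : CUᵀ * CU = 1 := by
    rw [← cmpd_transpose, ← cmpd_mul, orth_tr_mul hU, cmpd_one]
  have hCVtCV : CVᵀ * CV = 1 := by
    rw [← cmpd_transpose, ← cmpd_mul, orth_tr_mul hV, cmpd_one]
  have hCVCVt : CV * CVᵀ = 1 := by
    rw [← cmpd_transpose, ← cmpd_mul, orth_mul_tr hV, cmpd_one]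
  have hMtM : (cmpd n k A)ᵀ * cmpd n k A = CVᵀ * D2 * CV := by
    have hcm : cmpd n k A = CU * CD * CV := by
      rw [hA, cmpd_mul, cmpd_mul, cmpd_diagonal]
    rw [hcm]
    simp only [Matrix.transpose_mul, Matrix.mul_assoc]
    have hCDt : CDᵀ = CD := Matrix.diagonal_transpose _
    rw [hCDt, cancel_left hCUtCU, ← Matrix.mul_assoc CD CD CV, hCDdef,
      Matrix.diagonal_mul_diagonal]
    have hfun : (fun S : {S : Finset (Fin n) // S.card = k} =>
        (∏ i ∈ S.1, d i) * ∏ i ∈ S.1, d i)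
        = fun S : {S : Finset (Fin n) // S.card = k} => (∏ i ∈ S.1, d i) ^ 2 :=
      funext fun S => (sq _).symm
    rw [hfun, ← hD2def]
  have hkey : c • (1 : Matrix {S : Finset (Fin n) // S.card = k}
        {S : Finset (Fin n) // S.card = k} ℝ) - (cmpd n k A)ᵀ * cmpd n k A
      = CVᵀ * (c • 1 - D2) * CV := by
    rw [hMtM, Matrix.mul_sub, Matrix.sub_mul, mul_smul_comm, Matrix.mul_one,
      smul_mul_assoc, hCVtCV]
  constructor
  · intro h
    unfold SBnd at h
    rw [hkey] at h
    have h2 := psd_conj h CVᵀ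
    rw [Matrix.transpose_transpose] at h2
    have h3 : CV * (CVᵀ * (c • 1 - D2) * CV) * CVᵀ = c • 1 - D2 := by
      simp only [← Matrix.mul_assoc]
      rw [hCVCVt, Matrix.one_mul, Matrix.mul_assoc, hCVCVt, Matrix.mul_one]
    rwa [h3] at h2
  · intro h
    unfold SBnd
    rw [hkey]
    exact psd_conj h CV

lemma prod_subset_le (α : ℕ → ℝ) (hmono : ∀ i j, i ≤ j → α j ≤ α i) (hnn : ∀ i, 0 ≤ α i)
    (S : Finset (Fin n)) (hS : S.card = k) :
    ∏ i ∈ S, α (i : ℕ) ≤ ∏ i ∈ Finset.range k, α i := by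
  have h2 : S = Finset.univ.map ⟨S.orderEmbOfFin hS, (S.orderEmbOfFin hS).injective⟩ := by
    apply Finset.coe_injective
    simp [Finset.range_orderEmbOfFin]
  rw [h2, Finset.prod_map, ← Fin.prod_univ_eq_prod_range (fun i => α i) k]
  refine Finset.prod_le_prod (fun i _ => hnn _) (fun i _ => ?_)
  have hle := le_of_strictMono_fin (S.orderEmbOfFin hS) (S.orderEmbOfFin hS).strictMono i.1 i.2
  simp only [Fin.eta] at hle
  exact hmono _ _ hle

lemma prod_nonneg_range (α : ℕ → ℝ) (hnn : ∀ i, 0 ≤ α i) (k : ℕ) :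
    0 ≤ ∏ i ∈ Finset.range k, α i :=
  Finset.prod_nonneg fun i _ => hnn i

/-- Horn's inequality: product of top-k singular values is submultiplicative. -/
lemma horn {n : ℕ} (A B : Matrix (Fin n) (Fin n) ℝ) (α β γ : ℕ → ℝ)
    (hα : IsSVals n A α) (hβ : IsSVals n B β) (hγ : IsSVals n (A * B) γ)
    (k : ℕ) (hk : k ≤ n) :
    ∏ i ∈ Finset.range k, γ i ≤
      (∏ i ∈ Finset.range k, α i) * (∏ i ∈ Finset.range k, β i) := by
  obtain ⟨hαm, hαn, -, Uα, Vα, hUα, hVα, hAeq⟩ := hα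
  obtain ⟨hβm, hβn, -, Uβ, Vβ, hUβ, hVβ, hBeq⟩ := hβ
  obtain ⟨hγm, hγn, -, Uγ, Vγ, hUγ, hVγ, hCeq⟩ := hγ
  set Pα := ∏ i ∈ Finset.range k, α i with hPα
  set Pβ := ∏ i ∈ Finset.range k, β i with hPβ
  have hPαnn : 0 ≤ Pα := prod_nonneg_range α hαn k
  have hPβnn : 0 ≤ Pβ := prod_nonneg_range β hβn k
  have hupper : ∀ (δ : ℕ → ℝ), (∀ i j, i ≤ j → δ j ≤ δ i) → (∀ i, 0 ≤ δ i) →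
      ∀ S : {S : Finset (Fin n) // S.card = k},
      0 ≤ (∏ i ∈ Finset.range k, δ i) ^ 2 - (∏ i ∈ S.1, δ (i : ℕ)) ^ 2 := by
    intro δ hm hn0 S
    have h1 : ∏ i ∈ S.1, δ (i : ℕ) ≤ ∏ i ∈ Finset.range k, δ i :=
      prod_subset_le δ hm hn0 S.1 S.2
    have h2 : 0 ≤ ∏ i ∈ S.1, δ (i : ℕ) := Finset.prod_nonneg fun i _ => hn0 _
    nlinarith
  have hbA : SBnd (cmpd n k A) (Pα ^ 2) := by
    rw [sbnd_svd_iff Uα Vα A hUα hVα _ hAeq]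
    have : (Pα ^ 2) • (1 : Matrix {S : Finset (Fin n) // S.card = k}
          {S : Finset (Fin n) // S.card = k} ℝ)
        - Matrix.diagonal (fun S : {S : Finset (Fin n) // S.card = k} =>
            (∏ i ∈ S.1, α (i : ℕ)) ^ 2)
        = Matrix.diagonal (fun S : {S : Finset (Fin n) // S.card = k} =>
            Pα ^ 2 - (∏ i ∈ S.1, α (i : ℕ)) ^ 2) := by
      rw [← Matrix.diagonal_one, ← Matrix.diagonal_smul, Matrix.diagonal_sub]
      congr 1
      funext S
      simp
    rw [this]
    exact Matrix.PosSemidef.diagonal (fun S => hupper α hαm hαn S)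
  have hbB : SBnd (cmpd n k B) (Pβ ^ 2) := by
    rw [sbnd_svd_iff Uβ Vβ B hUβ hVβ _ hBeq]
    have : (Pβ ^ 2) • (1 : Matrix {S : Finset (Fin n) // S.card = k}
          {S : Finset (Fin n) // S.card = k} ℝ)
        - Matrix.diagonal (fun S : {S : Finset (Fin n) // S.card = k} =>
            (∏ i ∈ S.1, β (i : ℕ)) ^ 2)
        = Matrix.diagonal (fun S : {S : Finset (Fin n) // S.card = k} =>
            Pβ ^ 2 - (∏ i ∈ S.1, β (i : ℕ)) ^ 2) := by
      rw [← Matrix.diagonal_one, ← Matrix.diagonal_smul, Matrix.diagonal_sub]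
      congr 1
      funext S
      simp
    rw [this]
    exact Matrix.PosSemidef.diagonal (fun S => hupper β hβm hβn S)
  have hbAB : SBnd (cmpd n k (A * B)) (Pα ^ 2 * Pβ ^ 2) := by
    rw [cmpd_mul]
    exact sbnd_mul hbA hbB (sq_nonneg _)
  have hpsd := (sbnd_svd_iff Uγ Vγ (A * B) hUγ hVγ _ hCeq _).mp hbAB
  -- evaluate diagonal entry at S₀ = {0, ..., k-1}
  have hlt : ∀ m ∈ Finset.range k, m < n := fun m hm =>
    lt_of_lt_of_le (Finset.mem_range.mp hm) hk
  set S₀ : Finset (Fin n) := (Finset.range k).attachFin hlt with hS₀def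
  have hS₀card : S₀.card = k := by
    rw [hS₀def, Finset.card_attachFin, Finset.card_range]
  have hS₀prod : ∏ i ∈ S₀, γ (i : ℕ) = ∏ i ∈ Finset.range k, γ i := by
    rw [hS₀def]
    refine Finset.prod_nbij (fun a => (a : ℕ)) ?_ ?_ ?_ (fun a _ => rfl)
    · intro a ha
      exact (Finset.mem_attachFin hlt).mp ha
    · intro a _ b _ hab
      exact Fin.val_injective hab
    · intro m hm
      exact ⟨⟨m, hlt m hm⟩, (Finset.mem_attachFin hlt).mpr hm, rfl⟩
  have hdiag := psd_diag_nonneg hpsd ⟨S₀, hS₀card⟩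
  simp only [Matrix.sub_apply, Matrix.smul_apply, Matrix.one_apply_eq,
    Matrix.diagonal_apply_eq, smul_eq_mul, mul_one] at hdiag
  rw [hS₀prod] at hdiag
  have hsq : (∏ i ∈ Finset.range k, γ i) ^ 2 ≤ (Pα * Pβ) ^ 2 := by
    rw [mul_pow]
    linarith
  have hγnn : 0 ≤ ∏ i ∈ Finset.range k, γ i := prod_nonneg_range γ hγn k
  exact (pow_le_pow_iff_left₀ hγnn (mul_nonneg hPαnn hPβnn) two_ne_zero).mp hsq

end Stmt10Aux

/-- submultiplicativity of the singular value function: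
ω_d(A·B) ≤ ω_d(A)·ω_d(B) for d = k + s, k ∈ {0,…,n−1}, s ∈ [0,1]. -/
theorem stmt10 (n : ℕ) (A B : Matrix (Fin n) (Fin n) ℝ) (α β γ : ℕ → ℝ)
    (hα : IsSVals n A α) (hβ : IsSVals n B β) (hγ : IsSVals n (A * B) γ)
    (k : ℕ) (hk : k < n) (s : ℝ) (hs0 : 0 ≤ s) (hs1 : s ≤ 1) :
    omegaD γ k s ≤ omegaD α k s * omegaD β k s := by
  have hk1 : k + 1 ≤ n := hk
  have h1 := Stmt10Aux.horn A B α β γ hα hβ hγ k hk.le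
  have h2 := Stmt10Aux.horn A B α β γ hα hβ hγ (k + 1) hk1
  obtain ⟨hαm, hαn, -, -⟩ := hα
  obtain ⟨hβm, hβn, -, -⟩ := hβ
  obtain ⟨hγm, hγn, -, -⟩ := hγ
  -- interpolation identity
  have interp : ∀ (δ : ℕ → ℝ), (∀ i, 0 ≤ δ i) →
      omegaD δ k s = (∏ i ∈ Finset.range k, δ i) ^ (1 - s) *
        (∏ i ∈ Finset.range (k + 1), δ i) ^ s := by
    intro δ hnn
    rw [omegaD, Finset.prod_range_succ]
    have hP : 0 ≤ ∏ i ∈ Finset.range k, δ i := Finset.prod_nonneg fun i _ => hnn i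
    rcases eq_or_lt_of_le hP with h0 | hpos
    · rw [← h0, zero_mul, zero_mul]
      rcases eq_or_ne s 1 with hs | hs
      · rw [hs, sub_self, Real.rpow_zero, Real.rpow_one, one_mul]
      · rw [Real.zero_rpow (sub_ne_zero.mpr (Ne.symm hs)), zero_mul]
    · rw [Real.mul_rpow hP (hnn k), ← mul_assoc, ← Real.rpow_add hpos, sub_add_cancel,
        Real.rpow_one]
  rw [interp γ hγn, interp α hαn, interp β hβn]
  have hPα : 0 ≤ ∏ i ∈ Finset.range k, α i := Finset.prod_nonneg fun i _ => hαn i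
  have hPβ : 0 ≤ ∏ i ∈ Finset.range k, β i := Finset.prod_nonneg fun i _ => hβn i
  have hPα1 : 0 ≤ ∏ i ∈ Finset.range (k + 1), α i := Finset.prod_nonneg fun i _ => hαn i
  have hPβ1 : 0 ≤ ∏ i ∈ Finset.range (k + 1), β i := Finset.prod_nonneg fun i _ => hβn i
  have hPγ : 0 ≤ ∏ i ∈ Finset.range k, γ i := Finset.prod_nonneg fun i _ => hγn i
  have hPγ1 : 0 ≤ ∏ i ∈ Finset.range (k + 1), γ i := Finset.prod_nonneg fun i _ => hγn i
  have e1 : (∏ i ∈ Finset.range k, γ i) ^ (1 - s)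
      ≤ ((∏ i ∈ Finset.range k, α i) * ∏ i ∈ Finset.range k, β i) ^ (1 - s) :=
    Real.rpow_le_rpow hPγ h1 (by linarith)
  have e2 : (∏ i ∈ Finset.range (k + 1), γ i) ^ s
      ≤ ((∏ i ∈ Finset.range (k + 1), α i) * ∏ i ∈ Finset.range (k + 1), β i) ^ s :=
    Real.rpow_le_rpow hPγ1 h2 hs0
  calc (∏ i ∈ Finset.range k, γ i) ^ (1 - s) * (∏ i ∈ Finset.range (k + 1), γ i) ^ s
      ≤ ((∏ i ∈ Finset.range k, α i) * ∏ i ∈ Finset.range k, β i) ^ (1 - s) *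
        ((∏ i ∈ Finset.range (k + 1), α i) * ∏ i ∈ Finset.range (k + 1), β i) ^ s := by
        exact mul_le_mul e1 e2 (Real.rpow_nonneg hPγ1 s) (Real.rpow_nonneg
          (mul_nonneg hPα hPβ) _)
    _ = (∏ i ∈ Finset.range k, α i) ^ (1 - s) * (∏ i ∈ Finset.range (k + 1), α i) ^ s *
        ((∏ i ∈ Finset.range k, β i) ^ (1 - s) * (∏ i ∈ Finset.range (k + 1), β i) ^ s) := by
        rw [Real.mul_rpow hPα hPβ, Real.mul_rpow hPα1 hPβ1]
        ring
end

section
/- Let α₁ ≥ α₂ ≥ α₃ > 0 with α₁α₂α₃ = e^{−(σ+b+1)t} and α₁ ≤ e^{at}, a > 0, and suppose α₁α₂ ≤ e^{at}. Then for d = 2 + s with s = a/(σ + b + 1 + a) ∈ (0,1), one has α₁α₂α₃^s ≤ 1; i.e., the singular value function ω_d is bounded by 1, so the Lyapunov dimension estimate dim ≤ 2 + a/(σ + b + 1 + a) follows. -/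
/-- algebraic core of the dimension estimate for local Lorenz attractors:
if α₁ ≥ α₂ ≥ α₃ > 0, α₁α₂α₃ = e^{−(σ+b+1)t}, α₁ ≤ e^{at} and α₁α₂ ≤ e^{at}, then with
s = a/(σ+b+1+a) ∈ (0,1) one has α₁α₂α₃^s ≤ 1, i.e. ω_{2+s} ≤ 1, giving the Lyapunov
dimension estimate dim ≤ 2 + a/(σ+b+1+a). -/
theorem stmt18 (σ b a t : ℝ) (hσ : 0 < σ) (hb : 0 < b) (ha : 0 < a) (ht : 0 < t)
    (α₁ α₂ α₃ : ℝ) (h12 : α₂ ≤ α₁) (h23 : α₃ ≤ α₂) (h3 : 0 < α₃)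
    (hdet : α₁ * α₂ * α₃ = Real.exp (-(σ + b + 1) * t))
    (h1 : α₁ ≤ Real.exp (a * t))
    (h12' : α₁ * α₂ ≤ Real.exp (a * t)) :
    0 < a / (σ + b + 1 + a) ∧ a / (σ + b + 1 + a) < 1 ∧
    α₁ * α₂ * α₃ ^ (a / (σ + b + 1 + a)) ≤ 1 := by
  set k : ℝ := σ + b + 1 with hk
  have hkpos : 0 < k := by positivity
  have hkapos : 0 < k + a := by positivity
  set s : ℝ := a / (k + a) with hs
  have hs0 : 0 < s := by positivity
  have hs1 : s < 1 := (div_lt_one hkapos).2 (by linarith)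
  refine ⟨hs0, hs1, ?_⟩
  have h2 : 0 < α₂ := lt_of_lt_of_le h3 h23
  have h1p : 0 < α₁ := lt_of_lt_of_le h2 h12
  have hP : 0 < α₁ * α₂ := mul_pos h1p h2
  have hα3 : α₃ = Real.exp (-k * t) / (α₁ * α₂) := by
    rw [eq_div_iff hP.ne']
    linear_combination hdet
  have key : α₁ * α₂ * α₃ ^ s = (α₁ * α₂) ^ (1 - s) * Real.exp (-k * t * s) := by
    rw [hα3, Real.div_rpow (Real.exp_pos _).le hP.le, ← Real.exp_mul,
      Real.rpow_sub hP, Real.rpow_one]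
    field_simp
  rw [key]
  have hbound : (α₁ * α₂) ^ (1 - s) ≤ Real.exp (k * t * s) := by
    have h := Real.rpow_le_rpow hP.le h12' (by linarith : (0:ℝ) ≤ 1 - s)
    have heq : Real.exp (a * t) ^ (1 - s) = Real.exp (k * t * s) := by
      rw [← Real.exp_mul]
      congr 1
      field_simp [hs]
      rw [hs]
      linear_combination -(div_mul_cancel₀ a hkapos.ne')
    rwa [heq] at h
  calc (α₁ * α₂) ^ (1 - s) * Real.exp (-k * t * s)
      ≤ Real.exp (k * t * s) * Real.exp (-k * t * s) := by
        gcongr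
    _ = 1 := by rw [← Real.exp_add]; simp
end
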